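/- Let Γ be a GKM-graph with axial function α : E → ℤ^k, and let Ξ be a face of Γ. For any two vertices p, q of Ξ, the ℤ-span of {α(e) : e ∈ star_Ξ(p)} equals the ℤ-span of {α(e) : e ∈ star_Ξ(q)}. (Hence the span α⟨Ξ⟩ of a face is well defined.) -/
import Mathlib


/-- The star of a set `F` of (directed) edges at a vertex `v`:
all edges in `F` with initial vertex `v`. -/
def edgeStar {V : Type} (F : Set (V × V)) (v : V) : Set (V × V) :=
  {e ∈ F | e.1 = v}

/-- A GKM-graph on the vertex type `V`, with connection `nabla` and axial
function `alpha` taking values in `ℤ^k`.  Edges are ordered pairs of distinct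
vertices; the edge set is closed under reversal and the underlying graph is
connected.  The connection `∇_e` restricts to a bijection from the star of
`i(e)` onto the star of `t(e)` sending `e` to its reversal, and the axial
function satisfies the rank, opposite sign and congruence conditions. -/
structure GKMGraph (V : Type) (k : ℕ) : Type where
  E : Set (V × V)
  nabla : V × V → V × V → V × V
  alpha : V × V → Fin k → ℤ
  vert_nonempty : Nonempty V
  no_loops : ∀ e ∈ E, e.1 ≠ e.2
  rev_mem : ∀ e ∈ E, (e.2, e.1) ∈ E
  graph_connected : ∀ u v : V, Relation.ReflTransGen (fun a b => (a, b) ∈ E) u v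
  nabla_bijOn : ∀ e ∈ E, Set.BijOn (nabla e) (edgeStar E e.1) (edgeStar E e.2)
  nabla_self : ∀ e ∈ E, nabla e e = (e.2, e.1)
  rank : ∀ v : V, Submodule.span ℤ (alpha '' edgeStar E v) = ⊤
  opposite : ∀ e ∈ E, alpha (e.2, e.1) = -alpha e
  congruence : ∀ e ∈ E, ∀ e' ∈ E, e'.1 = e.1 →
    ∃ c : ℤ, alpha (nabla e e') = alpha e' + c • alpha e

namespace GKMGraph

variable {V : Type} {k : ℕ}

/-- The star of the GKM-graph `Γ` at a vertex `v`. -/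
def star (Γ : GKMGraph V k) (v : V) : Set (V × V) := edgeStar Γ.E v

/-- `Γ.IsFace W F` : the subgraph with vertex set `W` and edge set `F` is a
face (totally geodesic subgraph) of `Γ`: it is a nonempty connected regular
subgraph closed under edge reversal and invariant under the connection. -/
structure IsFace (Γ : GKMGraph V k) (W : Set V) (F : Set (V × V)) : Prop where
  nonempty : W.Nonempty
  sub : F ⊆ Γ.E
  src_mem : ∀ e ∈ F, e.1 ∈ W
  tgt_mem : ∀ e ∈ F, e.2 ∈ W
  rev_mem : ∀ e ∈ F, (e.2, e.1) ∈ F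
  connected : ∀ u ∈ W, ∀ v ∈ W, Relation.ReflTransGen (fun a b => (a, b) ∈ F) u v
  invariant : ∀ e ∈ F, ∀ e' ∈ F, e'.1 = e.1 → Γ.nabla e e' ∈ F
  regular : ∃ r : ℕ, ∀ v ∈ W, (edgeStar F v).Finite ∧ (edgeStar F v).ncard = r

/-- `Γ.IsNFace W F r` : the subgraph `(W, F)` is an `r`-face of `Γ`,
i.e. a face all of whose stars have exactly `r` elements. -/
def IsNFace (Γ : GKMGraph V k) (W : Set V) (F : Set (V × V)) (r : ℕ) : Prop :=
  Γ.IsFace W F ∧ ∀ v ∈ W, (edgeStar F v).Finite ∧ (edgeStar F v).ncard = r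

/-- The span `α⟨Ξ⟩` of a face with edge set `F`, computed at the vertex `v`. -/
def faceSpan (Γ : GKMGraph V k) (F : Set (V × V)) (v : V) : Submodule ℤ (Fin k → ℤ) :=
  Submodule.span ℤ (Γ.alpha '' edgeStar F v)

/-- `Π_γ`, the composite `∇_{e_r} ∘ ⋯ ∘ ∇_{e_1}` of the connection along the
edge path `γ = (e_1, …, e_r)`, applied to an edge `e`. -/
def transport (Γ : GKMGraph V k) (γ : List (V × V)) (e : V × V) : V × V :=
  γ.foldl (fun x g => Γ.nabla g x) e

/-- An edge of `Γ` transversal to the subgraph `(W, F)`: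
it emanates from a vertex of `W` but does not belong to `F`. -/
def IsTransversal (Γ : GKMGraph V k) (W : Set V) (F : Set (V × V)) (e : V × V) : Prop :=
  e ∈ Γ.E ∧ e ∉ F ∧ e.1 ∈ W

/-- A chord of the subgraph `(W, F)`: a transversal edge both of whose
endpoints lie in `W`. -/
def IsChord (Γ : GKMGraph V k) (W : Set V) (F : Set (V × V)) (e : V × V) : Prop :=
  Γ.IsTransversal W F e ∧ e.2 ∈ W

/-- `Γ` is `j`-independent: the values of the axial function on any `j`
distinct edges with a common origin are linearly independent over `ℤ`. -/
def IsIndependent (Γ : GKMGraph V k) (j : ℕ) : Prop :=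
  ∀ v : V, ∀ s : Finset (V × V), ↑s ⊆ Γ.star v → s.card = j →
    LinearIndependent ℤ (fun e : {x : V × V // x ∈ s} => Γ.alpha e.1)

/-- `Γ` is `j`-complete: any `i ≤ j` distinct edges with a common origin `v`
form the star at `v` of some `i`-face of `Γ`. -/
def IsComplete (Γ : GKMGraph V k) (j : ℕ) : Prop :=
  ∀ v : V, ∀ i : ℕ, i ≤ j → ∀ s : Finset (V × V), ↑s ⊆ Γ.star v → s.card = i →
    ∃ (W : Set V) (F : Set (V × V)), Γ.IsNFace W F i ∧ v ∈ W ∧ edgeStar F v = ↑s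

/-- `Γ` is `n`-valent: every star of `Γ` has exactly `n` elements. -/
def IsValent (Γ : GKMGraph V k) (n : ℕ) : Prop :=
  ∀ v : V, (Γ.star v).Finite ∧ (Γ.star v).ncard = n

/-- `Γ'` is an extension of `Γ`: both GKM-graphs have the same underlying
graph and the same connection, and there is a surjective homomorphism
`p : ℤ^{k'} → ℤ^k` with `p ∘ α' = α` on all edges. -/
def IsExtension {k' : ℕ} (Γ' : GKMGraph V k') (Γ : GKMGraph V k) : Prop :=
  Γ'.E = Γ.E ∧
  (∀ e ∈ Γ.E, ∀ e' ∈ Γ.E, e'.1 = e.1 → Γ'.nabla e e' = Γ.nabla e e') ∧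
  ∃ p : (Fin k' → ℤ) →ₗ[ℤ] (Fin k → ℤ), Function.Surjective p ∧
    ∀ e ∈ Γ.E, p (Γ'.alpha e) = Γ.alpha e

end GKMGraph

/-- An edge path contained in the edge set `F`: consecutive edges are
composable (`t(e_m) = i(e_{m+1})`). -/
def IsEdgePathIn {V : Type} (F : Set (V × V)) (γ : List (V × V)) : Prop :=
  (∀ g ∈ γ, g ∈ F) ∧ γ.Chain' (fun g h => g.2 = h.1)

/-- the span of a face of a GKM-graph does not depend on the
choice of vertex at which it is computed. -/
theorem span_of_face_well_defined {V : Type} {k : ℕ} (Γ : GKMGraph V k)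
    (W : Set V) (F : Set (V × V)) (hF : Γ.IsFace W F)
    (p q : V) (hp : p ∈ W) (hq : q ∈ W) :
    Submodule.span ℤ (Γ.alpha '' edgeStar F p) =
      Submodule.span ℤ (Γ.alpha '' edgeStar F q) := by
  -- Step: along each edge of F, the span can only shrink.
  have step : ∀ u v : V, (u, v) ∈ F →
      Submodule.span ℤ (Γ.alpha '' edgeStar F v) ≤
        Submodule.span ℤ (Γ.alpha '' edgeStar F u) := by
    intro u v he
    obtain ⟨r, hr⟩ := hF.regular
    have hu : u ∈ W := hF.src_mem _ he
    have hv : v ∈ W := hF.tgt_mem _ he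
    have heE : (u, v) ∈ Γ.E := hF.sub he
    have hbij := Γ.nabla_bijOn _ heE
    have hsubu : edgeStar F u ⊆ edgeStar Γ.E u := fun x hx => ⟨hF.sub hx.1, hx.2⟩
    have hmaps : Set.MapsTo (Γ.nabla (u, v)) (edgeStar F u) (edgeStar F v) := by
      intro e' he'
      exact ⟨hF.invariant _ he _ he'.1 he'.2, (hbij.mapsTo (hsubu he')).2⟩
    have hinj : Set.InjOn (Γ.nabla (u, v)) (edgeStar F u) := hbij.injOn.mono hsubu
    -- image equals the whole star at v, by cardinality
    have himg : Γ.nabla (u, v) '' edgeStar F u = edgeStar F v := by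
      refine Set.eq_of_subset_of_ncard_le (Set.image_subset_iff.2 hmaps) ?_ (hr v hv).1
      rw [Set.ncard_image_of_injOn hinj, (hr v hv).2, (hr u hu).2]
    refine Submodule.span_le.2 ?_
    rintro x ⟨e'', he'', rfl⟩
    rw [← himg] at he''
    obtain ⟨e', he', rfl⟩ := he''
    obtain ⟨c, hc⟩ := Γ.congruence (u, v) heE e' (hF.sub he'.1) he'.2
    rw [hc]
    have h1 : Γ.alpha e' ∈ Submodule.span ℤ (Γ.alpha '' edgeStar F u) :=
      Submodule.subset_span ⟨e', he', rfl⟩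
    have h2 : Γ.alpha (u, v) ∈ Submodule.span ℤ (Γ.alpha '' edgeStar F u) :=
      Submodule.subset_span ⟨(u, v), ⟨he, rfl⟩, rfl⟩
    exact add_mem h1 (Submodule.smul_mem _ _ h2)
  have eqstep : ∀ u v : V, (u, v) ∈ F →
      Submodule.span ℤ (Γ.alpha '' edgeStar F u) =
        Submodule.span ℤ (Γ.alpha '' edgeStar F v) :=
    fun u v he => le_antisymm (step v u (hF.rev_mem _ he)) (step u v he)
  have hconn := hF.connected p hp q hq
  induction hconn with
  | refl => rfl
  | tail _ hbc ih =>
      exact (ih (hF.src_mem _ hbc)).trans (eqstep _ _ hbc)
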